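/- arXiv:2002.09603 — 4 statements merged into one kernel-verified Lean document; each statement's English description precedes it below -/
import Mathlib

section
/- Let A_uu be an invertible n_u×n_u matrix, and consider the 3×3 block matrix A_H = [[A_uu, A_up, 0],[A_pu, B̄_pp, Δt·A_pπ],[0, A_πp, A_ππ]] and block upper triangular preconditioner M = [[A_uu, A_up, 0],[0, B̃_p, Δt·A_pπ],[0, 0, C̃_π]] with B̃_p and C̃_π invertible, where C̃_π = A_ππ − Δt·A_πp·B̃_p⁻¹·A_pπ. Then the preconditioned matrix T = A_H·M⁻¹ equals the identity plus a matrix Z' whose rank is at most 2·n_p, so that at least n_u + n_π − n_p eigenvalues of T equal 1. -/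
open Matrix

/-- The preconditioned matrix `T = A_H * M⁻¹` equals the identity plus a matrix of rank
at most `2 * np`, hence the eigenvalue 1 has (geometric) multiplicity at least
`nu + npi - np`. -/
theorem stmt0 {nu np npi : ℕ} (hnp : np < npi)
    (Auu : Matrix (Fin nu) (Fin nu) ℝ) (Aup : Matrix (Fin nu) (Fin np) ℝ)
    (Apu : Matrix (Fin np) (Fin nu) ℝ) (Bpp : Matrix (Fin np) (Fin np) ℝ)
    (Apπ : Matrix (Fin np) (Fin npi) ℝ) (Aπp : Matrix (Fin npi) (Fin np) ℝ)
    (Aππ : Matrix (Fin npi) (Fin npi) ℝ) (Δt : ℝ)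
    (Btp : Matrix (Fin np) (Fin np) ℝ)
    (hAuu : IsUnit Auu.det) (hBtp : IsUnit Btp.det)
    (Ctπ : Matrix (Fin npi) (Fin npi) ℝ)
    (hCt : Ctπ = Aππ - Δt • (Aπp * Btp⁻¹ * Apπ))
    (hCtπ : IsUnit Ctπ.det)
    (AH M : Matrix ((Fin nu ⊕ Fin np) ⊕ Fin npi) ((Fin nu ⊕ Fin np) ⊕ Fin npi) ℝ)
    (hAH : AH = fromBlocks (fromBlocks Auu Aup Apu Bpp)
      (fromRows 0 (Δt • Apπ)) (fromCols 0 Aπp) Aππ)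
    (hM : M = fromBlocks (fromBlocks Auu Aup 0 Btp)
      (fromRows 0 (Δt • Apπ)) 0 Ctπ) :
    ∃ Z' : Matrix ((Fin nu ⊕ Fin np) ⊕ Fin npi) ((Fin nu ⊕ Fin np) ⊕ Fin npi) ℝ,
      AH * M⁻¹ = 1 + Z' ∧ Z'.rank ≤ 2 * np ∧
      nu + npi - np ≤ Module.finrank ℝ (LinearMap.ker (AH * M⁻¹ - 1).mulVecLin) := by
  -- M is invertible
  have hMdet : IsUnit M.det := by
    rw [hM, det_fromBlocks_zero₂₁, det_fromBlocks_zero₂₁]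
    exact (hAuu.mul hBtp).mul hCtπ
  have hMinv : M * M⁻¹ = 1 := mul_nonsing_inv M hMdet
  set Z' : Matrix ((Fin nu ⊕ Fin np) ⊕ Fin npi) ((Fin nu ⊕ Fin np) ⊕ Fin npi) ℝ :=
    AH * M⁻¹ - 1 with hZ'
  -- factor AH - M = X * Y through a (np ⊕ np)-dimensional space
  set X : Matrix ((Fin nu ⊕ Fin np) ⊕ Fin npi) (Fin np ⊕ Fin np) ℝ :=
    fromBlocks (fromRows 0 1) 0 0 Aπp with hX
  set Y : Matrix (Fin np ⊕ Fin np) ((Fin nu ⊕ Fin np) ⊕ Fin npi) ℝ :=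
    fromBlocks (fromCols Apu (Bpp - Btp)) 0 (fromCols 0 1)
      (Δt • (Btp⁻¹ * Apπ)) with hY
  have hD : AH - M = X * Y := by
    rw [hAH, hM, hX, hY, hCt, fromBlocks_multiply]
    ext i j
    rcases i with (i | i) | i <;> rcases j with (j | j) | j <;>
      simp [fromBlocks, Matrix.mul_apply, Matrix.one_apply,
        Fintype.sum_sum_type, Finset.mul_sum, Finset.sum_mul, mul_assoc, fromRows_apply_inl, fromRows_apply_inr, fromCols_apply_inl, fromCols_apply_inr]
    exact Finset.sum_comm
  have hZeq : Z' = X * (Y * M⁻¹) := by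
    rw [hZ', ← Matrix.mul_assoc, ← hD, Matrix.sub_mul, hMinv]
  have hrank : Z'.rank ≤ 2 * np := by
    calc Z'.rank ≤ X.rank := by rw [hZeq]; exact rank_mul_le_left X (Y * M⁻¹)
      _ ≤ Fintype.card (Fin np ⊕ Fin np) := X.rank_le_card_width
      _ = 2 * np := by simp [two_mul]
  refine ⟨Z', by rw [hZ']; abel, hrank, ?_⟩
  have hkey := (Z'.mulVecLin).finrank_range_add_finrank_ker
  rw [Module.finrank_fintype_fun_eq_card] at hkey
  have hcard : Fintype.card ((Fin nu ⊕ Fin np) ⊕ Fin npi) = nu + np + npi := by simp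
  have : Z'.rank + Module.finrank ℝ (LinearMap.ker (Z'.mulVecLin)) = nu + np + npi := by
    rw [← hcard, ← hkey]; rfl
  omega
end

section
/- With T = A_H·M⁻¹ as above, every eigenvalue of T is either 1 or of the form 1 + μ, where μ is a nonzero eigenvalue of the block matrix Z = [[E_p, −Δt·E_p·A_pπ·C̃_π⁻¹],[A_πp·B̃_p⁻¹, 0]] with E_p = B_p·B̃_p⁻¹ − I. -/
open Matrix

private lemma fromRows_add' {R : Type*} [AddCommMonoid R] {m₁ m₂ n : Type*}
    (A B : Matrix m₁ n R) (C D : Matrix m₂ n R) :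
    fromRows A C + fromRows B D = fromRows (A + B) (C + D) := by
  ext (_ | _) _ <;> rfl

private lemma fromCols_add' {R : Type*} [AddCommMonoid R] {m n₁ n₂ : Type*}
    (A B : Matrix m n₁ R) (C D : Matrix m n₂ R) :
    fromCols A C + fromCols B D = fromCols (A + B) (C + D) := by
  ext _ (_ | _) <;> simp [fromCols]

/-- Every eigenvalue of the preconditioned matrix `T = A_H * M⁻¹` is either `1`
or of the form `1 + μ` for a nonzero eigenvalue `μ` of the block matrix
`Z = [[E_p, −Δt·E_p·A_pπ·C̃_π⁻¹], [A_πp·B̃_p⁻¹, 0]]` with `E_p = B_p·B̃_p⁻¹ − I`. -/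
theorem stmt1 {nu np npi : ℕ}
    (Auu : Matrix (Fin nu) (Fin nu) ℝ) (Aup : Matrix (Fin nu) (Fin np) ℝ)
    (Apu : Matrix (Fin np) (Fin nu) ℝ) (Bpp : Matrix (Fin np) (Fin np) ℝ)
    (Apπ : Matrix (Fin np) (Fin npi) ℝ) (Aπp : Matrix (Fin npi) (Fin np) ℝ)
    (Aππ : Matrix (Fin npi) (Fin npi) ℝ) (Δt : ℝ)
    (Btp : Matrix (Fin np) (Fin np) ℝ)
    (hAuu : IsUnit Auu.det) (hBtp : IsUnit Btp.det)
    (Ctπ : Matrix (Fin npi) (Fin npi) ℝ)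
    (hCt : Ctπ = Aππ - Δt • (Aπp * Btp⁻¹ * Apπ))
    (hCtπ : IsUnit Ctπ.det)
    (AH M : Matrix ((Fin nu ⊕ Fin np) ⊕ Fin npi) ((Fin nu ⊕ Fin np) ⊕ Fin npi) ℝ)
    (hAH : AH = fromBlocks (fromBlocks Auu Aup Apu Bpp)
      (fromRows 0 (Δt • Apπ)) (fromCols 0 Aπp) Aππ)
    (hM : M = fromBlocks (fromBlocks Auu Aup 0 Btp)
      (fromRows 0 (Δt • Apπ)) 0 Ctπ)
    (Bp Ep : Matrix (Fin np) (Fin np) ℝ)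
    (hBp : Bp = Bpp - Apu * Auu⁻¹ * Aup)
    (hEp : Ep = Bp * Btp⁻¹ - 1)
    (Z : Matrix (Fin np ⊕ Fin npi) (Fin np ⊕ Fin npi) ℝ)
    (hZ : Z = fromBlocks Ep (-(Δt • (Ep * Apπ * Ctπ⁻¹))) (Aπp * Btp⁻¹) 0) :
    ∀ lam : ℂ,
      (∃ v : ((Fin nu ⊕ Fin np) ⊕ Fin npi) → ℂ, v ≠ 0 ∧
        ((AH * M⁻¹).map Complex.ofReal).mulVec v = lam • v) →
      lam = 1 ∨ ∃ μ : ℂ, μ ≠ 0 ∧ lam = 1 + μ ∧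
        ∃ w : (Fin np ⊕ Fin npi) → ℂ, w ≠ 0 ∧
          (Z.map Complex.ofReal).mulVec w = μ • w := by
  intro lam hvex
  obtain ⟨v, hv, hvec⟩ := hvex
  by_cases hl : lam = 1
  · exact Or.inl hl
  · right
    set U : Matrix ((Fin nu ⊕ Fin np) ⊕ Fin npi) (Fin np ⊕ Fin npi) ℝ :=
      fromBlocks (fromRows 0 1) 0 0 1 with hU
    set K : Matrix (Fin np ⊕ Fin npi) ((Fin nu ⊕ Fin np) ⊕ Fin npi) ℝ :=
      fromBlocks (fromCols Apu (Bpp - Btp)) 0 (fromCols 0 Aπp)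
        (Δt • (Aπp * Btp⁻¹ * Apπ)) with hK
    set J : Matrix ((Fin nu ⊕ Fin np) ⊕ Fin npi) (Fin np ⊕ Fin npi) ℝ :=
      fromBlocks (fromRows (-(Auu⁻¹ * (Aup * Btp⁻¹))) Btp⁻¹)
        (fromRows (Δt • (Auu⁻¹ * (Aup * (Btp⁻¹ * (Apπ * Ctπ⁻¹)))))
          (-(Δt • (Btp⁻¹ * (Apπ * Ctπ⁻¹))))) 0 Ctπ⁻¹ with hJ
    have hAuu1 : Auu * Auu⁻¹ = 1 := mul_nonsing_inv _ hAuu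
    have hBtp1 : Btp * Btp⁻¹ = 1 := mul_nonsing_inv _ hBtp
    have hCtπ1 : Ctπ * Ctπ⁻¹ = 1 := mul_nonsing_inv _ hCtπ
    have cAuu : ∀ {k : ℕ} (X : Matrix (Fin nu) (Fin k) ℝ), Auu * (Auu⁻¹ * X) = X := by
      intro k X; rw [← Matrix.mul_assoc, hAuu1, Matrix.one_mul]
    have cBtp : ∀ {k : ℕ} (X : Matrix (Fin np) (Fin k) ℝ), Btp * (Btp⁻¹ * X) = X := by
      intro k X; rw [← Matrix.mul_assoc, hBtp1, Matrix.one_mul]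
    have hdetM : IsUnit M.det := by
      rw [hM, det_fromBlocks_zero₂₁, det_fromBlocks_zero₂₁]
      exact (hAuu.mul hBtp).mul hCtπ
    have hMM : M * M⁻¹ = 1 := mul_nonsing_inv _ hdetM
    -- M * J = U
    have hMJ : M * J = U := by
      rw [hM, hJ, hU]
      simp only [fromBlocks_multiply, fromBlocks_mul_fromRows, fromRows_mul,
        Matrix.mul_zero, Matrix.zero_mul, add_zero, zero_add, Matrix.mul_one,
        Matrix.one_mul, Matrix.neg_mul, Matrix.mul_neg, Matrix.mul_smul,
        Matrix.smul_mul, cAuu, cBtp, hBtp1, hCtπ1, smul_neg, neg_neg,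
        fromRows_add', add_neg_cancel, neg_add_cancel, neg_zero, smul_zero,
        fromRows_zero]
    have hJU : M⁻¹ * U = J := by
      rw [← hMJ, ← Matrix.mul_assoc, nonsing_inv_mul _ hdetM, Matrix.one_mul]
    -- AH = M + U * K
    have hAHMK : AH = M + U * K := by
      rw [hAH, hM, hU, hK]
      simp only [fromBlocks_multiply, fromRows_mul, Matrix.mul_zero,
        Matrix.zero_mul, add_zero, zero_add, Matrix.mul_one, Matrix.one_mul,
        fromRows_zero]
      rw [hCt]
      ext ((i|i)|i) ((j|j)|j) <;>
        simp [fromBlocks, Matrix.add_apply,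
          Matrix.sub_apply, Matrix.smul_apply]
    -- K * J = Z
    have hKJ : K * J = Z := by
      rw [hK, hJ, hZ, hEp, hBp]
      simp only [fromBlocks_multiply, fromCols_mul_fromRows, Matrix.mul_zero,
        Matrix.zero_mul, add_zero, zero_add, Matrix.mul_neg, Matrix.neg_mul,
        Matrix.mul_smul, Matrix.smul_mul, Matrix.sub_mul, Matrix.mul_sub,
        Matrix.one_mul, Matrix.mul_one, Matrix.mul_assoc, cAuu, cBtp, hBtp1,
        smul_sub, smul_neg, neg_neg, neg_sub, smul_zero, neg_zero]
      abel
    have hT : AH * M⁻¹ = 1 + U * (K * M⁻¹) := by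
      rw [hAHMK, Matrix.add_mul, hMM, Matrix.mul_assoc]
    have hVU : (K * M⁻¹) * U = Z := by
      rw [Matrix.mul_assoc, hJU, hKJ]
    have hco : (Complex.ofReal : ℝ → ℂ) = ⇑Complex.ofRealHom := rfl
    set Uc := U.map Complex.ofReal with hUc
    set Vc := (K * M⁻¹).map Complex.ofReal with hVc
    have hZc : Vc * Uc = Z.map Complex.ofReal := by
      rw [hUc, hVc, hco, ← Matrix.map_mul, hVU]
    have hTc : (AH * M⁻¹).map Complex.ofReal = 1 + Uc * Vc := by
      rw [hT, hco, Matrix.map_add _ (by simp) _ _, Matrix.map_mul,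
        Matrix.map_one _ (map_zero _) (map_one _)]
      rfl
    have hkey : Uc.mulVec (Vc.mulVec v) = (lam - 1) • v := by
      rw [hTc] at hvec
      rw [Matrix.add_mulVec, Matrix.one_mulVec] at hvec
      rw [Matrix.mulVec_mulVec, sub_smul, one_smul, ← hvec]
      abel
    refine ⟨lam - 1, sub_ne_zero.mpr hl, by ring, Vc.mulVec v, ?_, ?_⟩
    · intro h0
      apply hv
      have h1 : Uc.mulVec (Vc.mulVec v) = 0 := by rw [h0, Matrix.mulVec_zero]
      rw [hkey] at h1
      rcases smul_eq_zero.mp h1 with h | h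
      · exact absurd h (sub_ne_zero.mpr hl)
      · exact h
    · rw [← hZc, ← Matrix.mulVec_mulVec, hkey, Matrix.mulVec_smul]
end

section
/- Let Z = [[E_p, −Δt·E_p·F],[G, 0]] be a block matrix with E_p ∈ ℝ^{n_p×n_p}, F ∈ ℝ^{n_p×n_π}, G ∈ ℝ^{n_π×n_p}, Δt > 0. Then every nonzero eigenvalue μ of Z satisfies |μ| ≤ ε + √(ε² + 2·Δt·γ·ε), where ε = ‖E_p‖/2 and γ = ‖F·G‖ for any submultiplicative matrix norm compatible with a vector norm. -/
open Matrix

/-- Every nonzero eigenvalue `μ` of `Z = [[E, −Δt·E·F], [G, 0]]` satisfies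
`|μ| ≤ ε + √(ε² + 2·Δt·γ·ε)` with `ε = ‖E‖/2` and `γ = ‖F·G‖`, for any
submultiplicative matrix norm compatible with a vector norm. -/
theorem stmt2 {np npi : ℕ}
    (E : Matrix (Fin np) (Fin np) ℝ) (F : Matrix (Fin np) (Fin npi) ℝ)
    (G : Matrix (Fin npi) (Fin np) ℝ) (Δt : ℝ) (hΔt : 0 < Δt)
    (N : Matrix (Fin np) (Fin np) ℂ → ℝ) (nv : (Fin np → ℂ) → ℝ)
    (hNnonneg : ∀ A, 0 ≤ N A)
    (hNsub : ∀ A B : Matrix (Fin np) (Fin np) ℂ, N (A * B) ≤ N A * N B)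
    (hnv0 : ∀ x, nv x = 0 ↔ x = 0)
    (hnvadd : ∀ x y, nv (x + y) ≤ nv x + nv y)
    (hnvsmul : ∀ (c : ℂ) x, nv (c • x) = ‖c‖ * nv x)
    (hcompat : ∀ (A : Matrix (Fin np) (Fin np) ℂ) x, nv (A.mulVec x) ≤ N A * nv x)
    (Z : Matrix (Fin np ⊕ Fin npi) (Fin np ⊕ Fin npi) ℝ)
    (hZ : Z = fromBlocks E (-(Δt • (E * F))) G 0)
    (ε γ : ℝ)
    (hε : ε = N (E.map Complex.ofReal) / 2)
    (hγ : γ = N ((F * G).map Complex.ofReal))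
    (μ : ℂ) (hμ : μ ≠ 0)
    (heig : ∃ v : (Fin np ⊕ Fin npi) → ℂ, v ≠ 0 ∧
      (Z.map Complex.ofReal).mulVec v = μ • v) :
    ‖μ‖ ≤ ε + Real.sqrt (ε ^ 2 + 2 * Δt * γ * ε) := by
  obtain ⟨v, hv0, hv⟩ := heig
  set Em := E.map Complex.ofReal with hEm
  set Fm := F.map Complex.ofReal with hFm
  set Gm := G.map Complex.ofReal with hGm
  set x : Fin np → ℂ := fun i => v (Sum.inl i) with hxdef
  set y : Fin npi → ℂ := fun j => v (Sum.inr j) with hydef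
  have hvelim : v = Sum.elim x y := by funext k; cases k <;> rfl
  have hZm : Z.map Complex.ofReal =
      fromBlocks Em (-((Δt : ℂ) • (Em * Fm))) Gm 0 := by
    subst hZ
    ext i j
    cases i <;> cases j <;>
      simp [Em, Fm, Gm, Matrix.map_apply, Matrix.mul_apply, Finset.mul_sum]
  rw [hZm, hvelim, fromBlocks_mulVec] at hv
  have h1 : Em.mulVec x - (Δt : ℂ) • ((Em * Fm).mulVec y) = μ • x := by
    funext i
    have := congrFun hv (Sum.inl i)
    simpa [Matrix.neg_mulVec, Matrix.smul_mulVec, sub_eq_add_neg] using this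
  have h2 : μ • y = Gm.mulVec x := by
    funext j
    have := congrFun hv (Sum.inr j)
    simpa using this.symm
  -- nonzero first block
  have hnvnonneg : ∀ z, 0 ≤ nv z := by
    intro z
    have h0 : nv (0 : Fin np → ℂ) = 0 := (hnv0 0).2 rfl
    have hneg : nv (-z) = nv z := by
      have := hnvsmul (-1) z
      simpa using this
    have := hnvadd z (-z)
    simp [h0, hneg] at this
    linarith
  have hxne : x ≠ 0 := by
    intro hx0
    apply hv0
    have hy0 : y = 0 := by
      have : μ • y = 0 := by rw [h2, hx0]; simp
      simpa [hμ] using smul_eq_zero.mp this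
    rw [hvelim, hx0, hy0]
    funext k; cases k <;> simp
  have hnvx : 0 < nv x := by
    rcases lt_or_eq_of_le (hnvnonneg x) with h | h
    · exact h
    · exact absurd ((hnv0 x).1 h.symm) hxne
  -- key vector equation
  have hFG : Fm * Gm = (F * G).map Complex.ofReal := by
    ext i j
    simp [Fm, Gm, Matrix.mul_apply, Matrix.map_apply]
  have hkey : (μ ^ 2) • x =
      Em.mulVec (μ • x) - (Δt : ℂ) • ((Em * (Fm * Gm)).mulVec x) := by
    calc (μ ^ 2) • x = μ • (μ • x) := by rw [sq]; exact (smul_smul μ μ x).symm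
      _ = μ • (Em.mulVec x - (Δt : ℂ) • ((Em * Fm).mulVec y)) := by rw [h1]
      _ = Em.mulVec (μ • x) - (Δt : ℂ) • ((Em * Fm).mulVec (μ • y)) := by
          rw [smul_sub, Matrix.mulVec_smul, smul_comm μ ((Δt : ℂ)), Matrix.mulVec_smul]
      _ = Em.mulVec (μ • x) - (Δt : ℂ) • ((Em * (Fm * Gm)).mulVec x) := by
          rw [h2, Matrix.mulVec_mulVec, Matrix.mul_assoc]
  -- take norms
  set t := ‖μ‖ with ht
  have ht0 : 0 ≤ t := norm_nonneg μ
  have hεnn : 0 ≤ ε := by rw [hε]; linarith [hNnonneg Em]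
  have hγnn : 0 ≤ γ := by rw [hγ]; exact hNnonneg _
  have hquad : t ^ 2 * nv x ≤ 2 * ε * t * nv x + 2 * Δt * γ * ε * nv x := by
    have hL : nv ((μ ^ 2) • x) = t ^ 2 * nv x := by
      rw [hnvsmul, norm_pow]
    have hsub : ∀ a b : Fin np → ℂ, nv (a - b) ≤ nv a + nv b := by
      intro a b
      have hneg : nv (-b) = nv b := by simpa using hnvsmul (-1) b
      calc nv (a - b) = nv (a + -b) := by rw [sub_eq_add_neg]
        _ ≤ nv a + nv (-b) := hnvadd a (-b)
        _ = nv a + nv b := by rw [hneg]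
    have hA : nv (Em.mulVec (μ • x)) ≤ 2 * ε * t * nv x := by
      calc nv (Em.mulVec (μ • x)) ≤ N Em * nv (μ • x) := hcompat _ _
        _ = N Em * (t * nv x) := by rw [hnvsmul]
        _ = 2 * ε * t * nv x := by rw [hε]; ring
    have hB : nv ((Δt : ℂ) • ((Em * (Fm * Gm)).mulVec x)) ≤ 2 * Δt * γ * ε * nv x := by
      have h1' : nv ((Δt : ℂ) • ((Em * (Fm * Gm)).mulVec x))
          = Δt * nv ((Em * (Fm * Gm)).mulVec x) := by
        rw [hnvsmul, Complex.norm_of_nonneg hΔt.le]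
      rw [h1']
      have h2' : nv ((Em * (Fm * Gm)).mulVec x) ≤ N Em * N (Fm * Gm) * nv x := by
        calc nv ((Em * (Fm * Gm)).mulVec x) ≤ N (Em * (Fm * Gm)) * nv x := hcompat _ _
          _ ≤ N Em * N (Fm * Gm) * nv x :=
            mul_le_mul_of_nonneg_right (hNsub _ _) (hnvnonneg x)
      have h3' : N Em * N (Fm * Gm) = 2 * ε * γ := by
        rw [hFG, hε, hγ]; ring
      calc Δt * nv ((Em * (Fm * Gm)).mulVec x)
          ≤ Δt * (N Em * N (Fm * Gm) * nv x) :=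
            mul_le_mul_of_nonneg_left h2' hΔt.le
        _ = 2 * Δt * γ * ε * nv x := by rw [h3']; ring
    calc t ^ 2 * nv x = nv ((μ ^ 2) • x) := hL.symm
      _ = nv (Em.mulVec (μ • x) - (Δt : ℂ) • ((Em * (Fm * Gm)).mulVec x)) := by rw [hkey]
      _ ≤ nv (Em.mulVec (μ • x)) + nv ((Δt : ℂ) • ((Em * (Fm * Gm)).mulVec x)) :=
          hsub _ _
      _ ≤ 2 * ε * t * nv x + 2 * Δt * γ * ε * nv x := add_le_add hA hB
  have hquad' : t ^ 2 ≤ 2 * ε * t + 2 * Δt * γ * ε := by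
    have := hquad
    nlinarith [hnvx]
  set s := Real.sqrt (ε ^ 2 + 2 * Δt * γ * ε) with hs
  have hargnn : 0 ≤ ε ^ 2 + 2 * Δt * γ * ε := by positivity
  have hs0 : 0 ≤ s := Real.sqrt_nonneg _
  have hs2 : s ^ 2 = ε ^ 2 + 2 * Δt * γ * ε := Real.sq_sqrt hargnn
  nlinarith [hquad', hs0, hs2, sq_nonneg (t - ε - s), sq_nonneg (t - ε + s)]
end

section
/- With the same data as above (A_ww SPD, H SPD, Δt > 0), for every vector π ∈ ℝ^{n_π} the identity πᵀ·C_π·π = (1/Δt)·pᵀ·H·p + (A_wp·p + A_wπ·π)ᵀ·A_ww⁻¹·(A_wp·p + A_wπ·π) holds, where p = Δt·(H − Δt·A_pw·A_ww⁻¹·A_wp)⁻¹·A_pw·A_ww⁻¹·A_wπ·π. -/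
open Matrix

/-- transpose trick for dot products -/
private lemma dot_transpose_mulVec {m n : ℕ} (M : Matrix (Fin m) (Fin n) ℝ)
    (u : Fin n → ℝ) (w : Fin m → ℝ) :
    u ⬝ᵥ Mᵀ.mulVec w = (M.mulVec u) ⬝ᵥ w := by
  rw [dotProduct_mulVec, vecMul_transpose, dotProduct_comm, dotProduct_mulVec,
    dotProduct_comm]

/-- Key quadratic-form identity for the second-level Schur complement: for every `π`,
with `p = Δt·(H − Δt·A_pw·A_ww⁻¹·A_wp)⁻¹·A_pw·A_ww⁻¹·A_wπ·π`, one has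
`πᵀ C_π π = (1/Δt)·pᵀ H p + (A_wp p + A_wπ π)ᵀ A_ww⁻¹ (A_wp p + A_wπ π)`. -/
theorem stmt5 {nw np npi : ℕ}
    (Aww : Matrix (Fin nw) (Fin nw) ℝ) (H : Matrix (Fin np) (Fin np) ℝ)
    (Awp : Matrix (Fin nw) (Fin np) ℝ) (Awπ : Matrix (Fin nw) (Fin npi) ℝ)
    (Δt : ℝ) (hΔt : 0 < Δt)
    (hAww : Aww.PosDef) (hH : H.PosDef)
    (Apw : Matrix (Fin np) (Fin nw) ℝ) (Aπw : Matrix (Fin npi) (Fin nw) ℝ)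
    (hApw : Apw = -Awpᵀ) (hAπw : Aπw = -Awπᵀ)
    (Cπ : Matrix (Fin npi) (Fin npi) ℝ)
    (hCπ : Cπ = -(Aπw * Aww⁻¹ * Awπ) -
      Δt • (Aπw * Aww⁻¹ * Awp * (H - Δt • (Apw * Aww⁻¹ * Awp))⁻¹ *
        (Apw * Aww⁻¹ * Awπ))) :
    ∀ vπ : Fin npi → ℝ, ∀ p : Fin np → ℝ,
      p = Δt • ((H - Δt • (Apw * Aww⁻¹ * Awp))⁻¹.mulVec
        ((Apw * Aww⁻¹ * Awπ).mulVec vπ)) →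
      vπ ⬝ᵥ Cπ.mulVec vπ =
        (1 / Δt) * (p ⬝ᵥ H.mulVec p) +
        (Awp.mulVec p + Awπ.mulVec vπ) ⬝ᵥ
          Aww⁻¹.mulVec (Awp.mulVec p + Awπ.mulVec vπ) := by
  intro vπ p hp
  have hΔt0 : Δt ≠ 0 := ne_of_gt hΔt
  set B := Aww⁻¹ with hBdef
  have hBpd : B.PosDef := hAww.inv
  have hBsym : Bᵀ = B := by
    have := hBpd.isHermitian
    rwa [Matrix.IsHermitian, conjTranspose_eq_transpose_of_trivial] at this
  set S := H - Δt • (Apw * B * Awp) with hSdef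
  -- S is positive definite, hence invertible
  have hSpd : S.PosDef := by
    have h0 : (Awpᵀ * B * Awp).PosSemidef := by
      have := hBpd.posSemidef.conjTranspose_mul_mul_same Awp
      rwa [conjTranspose_eq_transpose_of_trivial] at this
    have h1 : (Δt • (Awpᵀ * B * Awp)).PosSemidef := by
      refine PosSemidef.of_dotProduct_mulVec_nonneg ?_ (fun x => ?_)
      · have := h0.1
        rw [Matrix.IsHermitian] at this ⊢
        rw [conjTranspose_smul, this]
        simp
      · have := h0.dotProduct_mulVec_nonneg x
        rw [smul_mulVec, dotProduct_smul]
        exact smul_nonneg (le_of_lt hΔt) this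
    have hEq : S = H + Δt • (Awpᵀ * B * Awp) := by
      rw [hSdef, hApw]
      simp [Matrix.neg_mul, Matrix.mul_neg, sub_eq_add_neg]
    rw [hEq]
    exact hH.add_posSemidef h1
  have hSunit : IsUnit S.det := isUnit_iff_ne_zero.mpr (ne_of_gt hSpd.det_pos)
  have hSS : S * S⁻¹ = 1 := Matrix.mul_nonsing_inv S hSunit
  -- the defining relation for p
  have hxp : (Apw * B * Awπ).mulVec vπ = (1 / Δt) • S.mulVec p := by
    rw [hp, mulVec_smul, mulVec_mulVec, hSS, one_mulVec, smul_smul]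
    rw [one_div, inv_mul_cancel₀ hΔt0, one_smul]
  have hS6 : S⁻¹.mulVec ((Apw * B * Awπ).mulVec vπ) = (1 / Δt) • p := by
    rw [hp, smul_smul, one_div, inv_mul_cancel₀ hΔt0, one_smul]
  set a := Awp.mulVec p with ha
  set b := Awπ.mulVec vπ with hb
  -- symmetry of B in quadratic forms
  have hsymm : ∀ u w : Fin nw → ℝ, u ⬝ᵥ B.mulVec w = w ⬝ᵥ B.mulVec u := by
    intro u w
    rw [← hBsym, dot_transpose_mulVec, hBsym, dotProduct_comm]
  -- LHS computation
  have hterm1 : vπ ⬝ᵥ (Aπw * B * Awπ).mulVec vπ = -(b ⬝ᵥ B.mulVec b) := by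
    rw [hAπw, Matrix.neg_mul, Matrix.neg_mul, neg_mulVec, dotProduct_neg, neg_inj,
      Matrix.mul_assoc, ← mulVec_mulVec, dot_transpose_mulVec, ← hb, mulVec_mulVec]
  have hSinvS : S⁻¹.mulVec (S.mulVec p) = p := by
    rw [mulVec_mulVec, Matrix.nonsing_inv_mul S hSunit, one_mulVec]
  have hterm2 : vπ ⬝ᵥ (Aπw * B * Awp * S⁻¹ * (Apw * B * Awπ)).mulVec vπ
      = -((1 / Δt) * (b ⬝ᵥ B.mulVec a)) := by
    rw [← mulVec_mulVec vπ (Aπw * B * Awp * S⁻¹) (Apw * B * Awπ), hxp, hAπw,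
      Matrix.neg_mul, Matrix.neg_mul, Matrix.neg_mul, neg_mulVec, dotProduct_neg, neg_inj]
    rw [mulVec_smul, dotProduct_smul, smul_eq_mul]
    congr 1
    rw [← mulVec_mulVec (S.mulVec p) (Awπᵀ * B * Awp) S⁻¹, hSinvS,
      Matrix.mul_assoc, ← mulVec_mulVec p Awπᵀ (B * Awp), dot_transpose_mulVec,
      ← hb, ← mulVec_mulVec p B Awp, ← ha]
  have hLHS : vπ ⬝ᵥ Cπ.mulVec vπ = b ⬝ᵥ B.mulVec b + b ⬝ᵥ B.mulVec a := by
    rw [hCπ, sub_mulVec, neg_mulVec, dotProduct_sub, dotProduct_neg, hterm1,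
      smul_mulVec, dotProduct_smul, hterm2, smul_eq_mul]
    field_simp
    ring
  -- the key cross-term identity
  have hcross : a ⬝ᵥ B.mulVec b = -((1 / Δt) * (p ⬝ᵥ H.mulVec p)) - a ⬝ᵥ B.mulVec a := by
    have h1 : a ⬝ᵥ B.mulVec b = p ⬝ᵥ (Awpᵀ * B * Awπ).mulVec vπ := by
      rw [hb, Matrix.mul_assoc, ← mulVec_mulVec vπ Awpᵀ (B * Awπ), dot_transpose_mulVec,
        ← ha, mulVec_mulVec]
    have h2 : (Awpᵀ * B * Awπ : Matrix (Fin np) (Fin npi) ℝ) = -(Apw * B * Awπ) := by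
      rw [hApw]; simp [Matrix.neg_mul]
    have h3 : p ⬝ᵥ S.mulVec p = p ⬝ᵥ H.mulVec p + Δt * (a ⬝ᵥ B.mulVec a) := by
      have hq : p ⬝ᵥ (Apw * B * Awp).mulVec p = -(a ⬝ᵥ B.mulVec a) := by
        rw [hApw, Matrix.neg_mul, Matrix.neg_mul, neg_mulVec, dotProduct_neg, neg_inj,
          Matrix.mul_assoc, ← mulVec_mulVec p Awpᵀ (B * Awp), dot_transpose_mulVec,
          ← ha, ← mulVec_mulVec p B Awp, ← ha]
      rw [hSdef, sub_mulVec, dotProduct_sub, smul_mulVec, dotProduct_smul,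
        smul_eq_mul, hq]
      ring
    rw [h1, h2, neg_mulVec, dotProduct_neg, hxp, dotProduct_smul, smul_eq_mul, h3]
    field_simp
    ring
  -- put it all together
  rw [hLHS]
  rw [mulVec_add, dotProduct_add, add_dotProduct, add_dotProduct]
  have hba : b ⬝ᵥ B.mulVec a = a ⬝ᵥ B.mulVec b := hsymm b a
  rw [hba, hcross]
  ring
end
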